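/- Let x be a zero-mean square-integrable random vector in ℝ^n with covariance matrix Σ_x = E[x xᵀ], let Γ ∈ ℝ^{k×n}, and set θ̃ = Γx. Let Q : ℝ^n → ℝ^n be a Borel measurable map with finite range that satisfies the centroid condition Q(x) = E[x | Q(x)] almost surely (as holds for the MSE-optimal quantizer of x). Then, with Σ_Q = E[Q(x) Q(x)ᵀ], the estimation error of θ̃ from the quantizer output satisfies E‖θ̃ − E[θ̃ | Q(x)]‖² = Tr(Γᵀ Γ (Σ_x − Σ_Q)). -/

import Mathlib

open MeasureTheory Matrix

private def mQ {n : ℕ} {Ω : Type*} (Q : (Fin n → ℝ) → (Fin n → ℝ))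
    (x : Ω → Fin n → ℝ) : MeasurableSpace Ω :=
  MeasurableSpace.comap (fun ω => Q (x ω)) inferInstance

private lemma mul_integrable_of_memL2 {Ω : Type*} [MeasurableSpace Ω] {μ : Measure Ω}
    {f g : Ω → ℝ} (hf : MemLp f 2 μ) (hg : MemLp g 2 μ) :
    Integrable (fun ω => f ω * g ω) μ := by
  have h : MemLp (f • g) 1 μ := hg.smul hf (hpqr := ⟨by
    rw [inv_one, ENNReal.inv_two_add_inv_two]⟩)
  exact memLp_one_iff_integrable.mp h

/-- If `θ̃ = Γx` and `Q` is a finite-range quantizer of `x` satisfying the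
centroid condition, then `E‖θ̃ − E[θ̃ | Q(x)]‖² = Tr(Γᵀ Γ (Σ_x − Σ_Q))`. -/
theorem task_ignorant_linear_distortion
    {Ω : Type*} [MeasurableSpace Ω] (μ : Measure Ω) [IsProbabilityMeasure μ]
    {k n : ℕ}
    (x : Ω → Fin n → ℝ) (hxmeas : Measurable x)
    (hx2 : ∀ i, MemLp (fun ω => x ω i) 2 μ)
    (hxmean : ∀ i, (∫ ω, x ω i ∂μ) = 0)
    (Sx : Matrix (Fin n) (Fin n) ℝ)
    (hSx : ∀ i j, Sx i j = ∫ ω, x ω i * x ω j ∂μ)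
    (Γ : Matrix (Fin k) (Fin n) ℝ)
    (Q : (Fin n → ℝ) → (Fin n → ℝ)) (hQmeas : Measurable Q)
    (hQfin : (Set.range Q).Finite)
    (hcentroid : ∀ i, (fun ω => Q (x ω) i)
      =ᵐ[μ] condExp (MeasurableSpace.comap (fun ω => Q (x ω)) inferInstance) μ
        (fun ω => x ω i))
    (SQ : Matrix (Fin n) (Fin n) ℝ)
    (hSQ : ∀ i j, SQ i j = ∫ ω, Q (x ω) i * Q (x ω) j ∂μ) :
    (∫ ω, ∑ i, (Γ.mulVec (x ω) i
        - condExp (MeasurableSpace.comap (fun ω' => Q (x ω')) inferInstance) μ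
            (fun ω' => Γ.mulVec (x ω') i) ω) ^ 2 ∂μ)
      = Matrix.trace (Γᵀ * Γ * (Sx - SQ)) := by
  classical
  show (∫ ω, ∑ i, (Γ.mulVec (x ω) i
        - condExp (mQ Q x) μ (fun ω' => Γ.mulVec (x ω') i) ω) ^ 2 ∂μ)
      = Matrix.trace (Γᵀ * Γ * (Sx - SQ))
  have hcentroid' : ∀ i, (fun ω => Q (x ω) i)
      =ᵐ[μ] condExp (mQ Q x) μ (fun ω => x ω i) := hcentroid
  clear hcentroid
  have hQx : Measurable fun ω => Q (x ω) := hQmeas.comp hxmeas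
  have hm : mQ Q x ≤ ‹MeasurableSpace Ω› := hQx.comap_le
  haveI : SigmaFinite (μ.trim hm) := by infer_instance
  -- a uniform bound for Q
  obtain ⟨C, hC⟩ : ∃ C : ℝ, ∀ y, ‖Q y‖ ≤ C := by
    obtain ⟨C, hC⟩ := (hQfin.image fun v => ‖v‖).bddAbove
    exact ⟨C, fun y => hC (Set.mem_image_of_mem _ (Set.mem_range_self y))⟩
  have hCl : ∀ (ω : Ω) (l : Fin n), ‖Q (x ω) l‖ ≤ C :=
    fun ω l => (norm_le_pi_norm (Q (x ω)) l).trans (hC _)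
  -- membership in L²
  have hQlmeas : ∀ l, Measurable fun ω => Q (x ω) l :=
    fun l => (measurable_pi_apply l).comp hQx
  have hQ2 : ∀ l, MemLp (fun ω => Q (x ω) l) 2 μ := fun l =>
    MemLp.of_bound (hQlmeas l).aestronglyMeasurable C
      (Filter.Eventually.of_forall fun ω => hCl ω l)
  have hQsm : ∀ l, StronglyMeasurable[mQ Q x] fun ω => Q (x ω) l := by
    intro l
    have h0 : Measurable[mQ Q x] fun ω => Q (x ω) :=
      comap_measurable (fun ω => Q (x ω))
    exact ((measurable_pi_apply l).comp h0).stronglyMeasurable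
  have hxint : ∀ j, Integrable (fun ω => x ω j) μ := fun j => (hx2 j).integrable one_le_two
  have hxx : ∀ j l, Integrable (fun ω => x ω j * x ω l) μ :=
    fun j l => mul_integrable_of_memL2 (hx2 j) (hx2 l)
  have hxQ : ∀ j l, Integrable (fun ω => x ω j * Q (x ω) l) μ :=
    fun j l => mul_integrable_of_memL2 (hx2 j) (hQ2 l)
  have hQxint : ∀ j l, Integrable (fun ω => Q (x ω) j * x ω l) μ :=
    fun j l => mul_integrable_of_memL2 (hQ2 j) (hx2 l)
  have hQQ : ∀ j l, Integrable (fun ω => Q (x ω) j * Q (x ω) l) μ :=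
    fun j l => mul_integrable_of_memL2 (hQ2 j) (hQ2 l)
  -- symmetry of SQ
  have hSQsymm : ∀ j l, SQ j l = SQ l j := by
    intro j l
    rw [hSQ, hSQ]
    exact integral_congr_ae (Filter.Eventually.of_forall fun ω => mul_comm _ _)
  -- orthogonality: E[x_j Q(x)_l] = SQ j l
  have key : ∀ j l : Fin n, (∫ ω, x ω j * Q (x ω) l ∂μ) = SQ j l := by
    intro j l
    have h1 : μ[(fun ω => Q (x ω) l) * fun ω => x ω j|mQ Q x]
        =ᵐ[μ] (fun ω => Q (x ω) l) * μ[fun ω => x ω j|mQ Q x] :=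
      condExp_stronglyMeasurable_mul_of_bound hm (hQsm l) (hxint j) C
        (Filter.Eventually.of_forall fun ω => hCl ω l)
    have h2 : μ[(fun ω => Q (x ω) l) * fun ω => x ω j|mQ Q x]
        =ᵐ[μ] fun ω => Q (x ω) l * Q (x ω) j := by
      filter_upwards [h1, hcentroid' j] with ω h1ω h2ω
      rw [h1ω, Pi.mul_apply, ← h2ω]
    have h3 : (∫ ω, (μ[(fun ω' => Q (x ω') l) * fun ω' => x ω' j|mQ Q x]) ω ∂μ)
        = ∫ ω, Q (x ω) l * x ω j ∂μ := integral_condExp hm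
    have h4 : (∫ ω, (μ[(fun ω' => Q (x ω') l) * fun ω' => x ω' j|mQ Q x]) ω ∂μ)
        = ∫ ω, Q (x ω) l * Q (x ω) j ∂μ := integral_congr_ae h2
    calc (∫ ω, x ω j * Q (x ω) l ∂μ)
        = ∫ ω, Q (x ω) l * x ω j ∂μ :=
          integral_congr_ae (Filter.Eventually.of_forall fun ω => mul_comm _ _)
      _ = ∫ ω, Q (x ω) l * Q (x ω) j ∂μ := h3.symm.trans h4
      _ = SQ l j := (hSQ l j).symm
      _ = SQ j l := (hSQsymm j l).symm
  -- cross moments of the error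
  have hcross : ∀ j l : Fin n,
      (∫ ω, (x ω j - Q (x ω) j) * (x ω l - Q (x ω) l) ∂μ) = Sx j l - SQ j l := by
    intro j l
    have e2 : (∫ ω, x ω j * Q (x ω) l ∂μ) = SQ j l := key j l
    have e3 : (∫ ω, Q (x ω) j * x ω l ∂μ) = SQ j l := by
      have h := key l j
      rw [hSQsymm l j] at h
      rw [← h]
      exact integral_congr_ae (Filter.Eventually.of_forall fun ω => mul_comm _ _)
    have h4 : (∫ ω, (x ω j * x ω l - x ω j * Q (x ω) l - Q (x ω) j * x ω l)
          + Q (x ω) j * Q (x ω) l ∂μ)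
        = (∫ ω, x ω j * x ω l - x ω j * Q (x ω) l - Q (x ω) j * x ω l ∂μ)
          + ∫ ω, Q (x ω) j * Q (x ω) l ∂μ :=
      integral_add (((hxx j l).sub (hxQ j l)).sub (hQxint j l)) (hQQ j l)
    have h5 : (∫ ω, x ω j * x ω l - x ω j * Q (x ω) l - Q (x ω) j * x ω l ∂μ)
        = (∫ ω, x ω j * x ω l - x ω j * Q (x ω) l ∂μ) - ∫ ω, Q (x ω) j * x ω l ∂μ :=
      integral_sub ((hxx j l).sub (hxQ j l)) (hQxint j l)
    have h6 : (∫ ω, x ω j * x ω l - x ω j * Q (x ω) l ∂μ)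
        = (∫ ω, x ω j * x ω l ∂μ) - ∫ ω, x ω j * Q (x ω) l ∂μ :=
      integral_sub (hxx j l) (hxQ j l)
    calc (∫ ω, (x ω j - Q (x ω) j) * (x ω l - Q (x ω) l) ∂μ)
        = ∫ ω, (x ω j * x ω l - x ω j * Q (x ω) l - Q (x ω) j * x ω l)
            + Q (x ω) j * Q (x ω) l ∂μ :=
          integral_congr_ae (Filter.Eventually.of_forall fun ω => by ring)
      _ = Sx j l - SQ j l := by
          rw [h4, h5, h6, e2, e3, ← hSx j l, ← hSQ j l, hSQ j l]
          ring
  -- conditional expectation of the linear estimate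
  have hce : ∀ i : Fin k, μ[(fun ω => Γ.mulVec (x ω) i)|mQ Q x]
      =ᵐ[μ] fun ω => Γ.mulVec (Q (x ω)) i := by
    intro i
    have h1 : (fun ω => Γ.mulVec (x ω) i) = ∑ j : Fin n, Γ i j • fun ω => x ω j := by
      funext ω
      simp [Matrix.mulVec, dotProduct, Finset.sum_apply]
    rw [h1]
    have h2 : ∀ j : Fin n, μ[Γ i j • fun ω => x ω j|mQ Q x]
        =ᵐ[μ] fun ω => Γ i j * Q (x ω) j := by
      intro j
      refine (condExp_smul (Γ i j) (fun ω => x ω j) (mQ Q x)).trans ?_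
      filter_upwards [hcentroid' j] with ω hω
      simp [← hω]
    refine (condExp_finset_sum (fun j _ => (hxint j).smul (Γ i j)) (mQ Q x)).trans ?_
    filter_upwards [ae_all_iff.mpr h2] with ω hω
    simp only [Finset.sum_apply]
    rw [Finset.sum_congr rfl fun j _ => hω j]
    simp [Matrix.mulVec, dotProduct]
  -- rewrite the integrand a.e.
  have hae : (fun ω => ∑ i, (Γ.mulVec (x ω) i - (μ[(fun ω' => Γ.mulVec (x ω') i)|mQ Q x]) ω) ^ 2)
      =ᵐ[μ] fun ω => ∑ i : Fin k, ∑ j : Fin n, ∑ l : Fin n,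
        Γ i j * Γ i l * ((x ω j - Q (x ω) j) * (x ω l - Q (x ω) l)) := by
    filter_upwards [ae_all_iff.mpr hce] with ω hω
    refine Finset.sum_congr rfl fun i _ => ?_
    rw [hω i]
    have : Γ.mulVec (x ω) i - Γ.mulVec (Q (x ω)) i
        = ∑ j : Fin n, Γ i j * (x ω j - Q (x ω) j) := by
      simp [Matrix.mulVec, dotProduct, mul_sub, Finset.sum_sub_distrib]
    rw [this, sq, Finset.sum_mul_sum]
    refine Finset.sum_congr rfl fun j _ => Finset.sum_congr rfl fun l _ => ?_
    ring
  rw [integral_congr_ae hae]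
  -- compute the integral of the triple sum
  have hint : ∀ (i : Fin k) (j l : Fin n),
      Integrable (fun ω => Γ i j * Γ i l * ((x ω j - Q (x ω) j) * (x ω l - Q (x ω) l))) μ :=
    fun i j l => (mul_integrable_of_memL2 ((hx2 j).sub (hQ2 j)) ((hx2 l).sub (hQ2 l))).const_mul _
  rw [integral_finset_sum _ fun i _ => integrable_finset_sum _ fun j _ =>
    integrable_finset_sum _ fun l _ => hint i j l]
  have hval : ∀ i : Fin k, (∫ ω, ∑ j : Fin n, ∑ l : Fin n,
      Γ i j * Γ i l * ((x ω j - Q (x ω) j) * (x ω l - Q (x ω) l)) ∂μ)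
      = ∑ j : Fin n, ∑ l : Fin n, Γ i j * Γ i l * (Sx j l - SQ j l) := by
    intro i
    rw [integral_finset_sum _ fun j _ => integrable_finset_sum _ fun l _ => hint i j l]
    refine Finset.sum_congr rfl fun j _ => ?_
    rw [integral_finset_sum _ fun l _ => hint i j l]
    refine Finset.sum_congr rfl fun l _ => ?_
    rw [integral_const_mul, hcross j l]
  rw [Finset.sum_congr rfl fun i _ => hval i]
  -- final trace identity
  have hSxsymm : ∀ j l, Sx j l = Sx l j := by
    intro j l
    rw [hSx, hSx]
    exact integral_congr_ae (Filter.Eventually.of_forall fun ω => mul_comm _ _)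
  calc (∑ i : Fin k, ∑ j : Fin n, ∑ l : Fin n, Γ i j * Γ i l * (Sx j l - SQ j l))
      = ∑ j : Fin n, ∑ i : Fin k, ∑ l : Fin n, Γ i j * Γ i l * (Sx j l - SQ j l) :=
        Finset.sum_comm
    _ = ∑ j : Fin n, ∑ l : Fin n, ∑ i : Fin k, Γ i j * Γ i l * (Sx j l - SQ j l) :=
        Finset.sum_congr rfl fun j _ => Finset.sum_comm
    _ = Matrix.trace (Γᵀ * Γ * (Sx - SQ)) := by
        simp only [Matrix.trace, Matrix.diag, Matrix.mul_apply, Matrix.transpose_apply,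
          Matrix.sub_apply, Finset.sum_mul]
        refine Finset.sum_congr rfl fun j _ => Finset.sum_congr rfl fun l _ =>
          Finset.sum_congr rfl fun i _ => ?_
        rw [hSxsymm j l, hSQsymm j l]
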